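/- There are infinitely many positive integers n such that both n and n+1 are squarefree. -/

import Mathlib

open Finset

lemma telescope (s : ℕ) : ∑ j ∈ Icc 1 s, ((1:ℚ)/(j:ℚ) - 1/((j:ℚ)+1)) = 1 - 1/((s:ℚ)+1) := by
  induction s with
  | zero => simp
  | succ n ih =>
    rcases Nat.eq_zero_or_pos n with h | h
    · subst h; norm_num
    · rw [Finset.sum_Icc_succ_top (by omega : 1 ≤ n+1), ih]
      push_cast; ring

lemma prime_sq_inv_sum (s : ℕ) :
    ∑ p ∈ (Icc 2 s).filter Nat.Prime, (1:ℚ)/((p:ℚ)^2) ≤ 1/2 - 1/(4*((s:ℚ)+1)) := by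
  set T : Finset ℕ := insert 2 ((Icc 1 s).image (fun j => 2*j+1)) with hT
  have hsub : (Icc 2 s).filter Nat.Prime ⊆ T := by
    rw [hT]
    intro p hp
    simp only [mem_filter, mem_Icc] at hp
    obtain ⟨⟨h2, hs⟩, hpr⟩ := hp
    rcases Nat.Prime.eq_two_or_odd' hpr with he | ho
    · simp [he]
    · rw [mem_insert, mem_image]
      right
      refine ⟨p / 2, ?_, ?_⟩
      · simp only [mem_Icc]; omega
      · obtain ⟨k, hk⟩ := ho; omega
  have h1 : ∑ p ∈ (Icc 2 s).filter Nat.Prime, (1:ℚ)/((p:ℚ)^2) ≤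
      ∑ p ∈ T, (1:ℚ)/((p:ℚ)^2) := by
    apply Finset.sum_le_sum_of_subset_of_nonneg hsub
    intro i _ _; positivity
  have h2notmem : (2 : ℕ) ∉ (Icc 1 s).image (fun j => 2*j+1) := by
    simp only [mem_image]; rintro ⟨j, _, hj⟩; omega
  rw [hT, Finset.sum_insert h2notmem] at h1
  have hinj : Set.InjOn (fun j => 2*j+1) ↑(Icc 1 s) := fun a _ b _ h => by simp only [] at h; omega
  rw [Finset.sum_image (fun a ha b hb h => hinj ha hb h)] at h1
  have h2 : ∑ j ∈ Icc 1 s, (1:ℚ)/(((2*j+1 : ℕ):ℚ)^2) ≤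
      ∑ j ∈ Icc 1 s, (1/4) * ((1:ℚ)/(j:ℚ) - 1/((j:ℚ)+1)) := by
    apply Finset.sum_le_sum
    intro j hj
    simp only [mem_Icc] at hj
    have hj1 : (1:ℚ) ≤ (j:ℚ) := by exact_mod_cast hj.1
    have hpos : (0:ℚ) < 4*(j:ℚ)*((j:ℚ)+1) := by nlinarith
    have heq : (1/4) * ((1:ℚ)/(j:ℚ) - 1/((j:ℚ)+1)) = 1/(4*(j:ℚ)*((j:ℚ)+1)) := by
      field_simp; ring
    rw [heq]
    apply one_div_le_one_div_of_le hpos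
    push_cast
    nlinarith
  rw [← Finset.mul_sum, telescope] at h2
  calc ∑ p ∈ (Icc 2 s).filter Nat.Prime, (1:ℚ)/((p:ℚ)^2)
      ≤ 1/((2:ℕ):ℚ)^2 + ∑ j ∈ Icc 1 s, (1:ℚ)/(((2*j+1 : ℕ):ℚ)^2) := h1
    _ ≤ 1/((2:ℕ):ℚ)^2 + (1/4) * (1 - 1/((s:ℚ)+1)) := by linarith
    _ = 1/2 - 1/(4*((s:ℚ)+1)) := by
          have hp : (0:ℚ) < (s:ℚ)+1 := by positivity
          field_simp
          ring

lemma card_nonsquarefree (x : ℕ) :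
    (((Ioc 0 x).filter fun n => ¬ Squarefree n).card : ℚ) ≤
      (x:ℚ) * (1/2 - 1/(4*((Nat.sqrt x:ℚ)+1))) := by
  set s := Nat.sqrt x with hs
  have hsub : (Ioc 0 x).filter (fun n => ¬ Squarefree n) ⊆
      ((Icc 2 s).filter Nat.Prime).biUnion (fun p => (Ioc 0 x).filter (fun n => p^2 ∣ n)) := by
    intro n hn
    simp only [mem_filter, mem_Ioc] at hn
    obtain ⟨⟨hn0, hnx⟩, hnsf⟩ := hn
    rw [Nat.squarefree_iff_prime_squarefree] at hnsf
    push_neg at hnsf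
    obtain ⟨p, hp, hdvd⟩ := hnsf
    rw [mem_biUnion]
    refine ⟨p, ?_, ?_⟩
    · simp only [mem_filter, mem_Icc]
      have hple : p * p ≤ n := Nat.le_of_dvd hn0 hdvd
      exact ⟨⟨hp.two_le, Nat.le_sqrt.2 (le_trans hple hnx)⟩, hp⟩
    · simp only [mem_filter, mem_Ioc]
      exact ⟨⟨hn0, hnx⟩, by rwa [sq]⟩
  have hcard : ((Ioc 0 x).filter fun n => ¬ Squarefree n).card ≤
      ∑ p ∈ (Icc 2 s).filter Nat.Prime, x / p^2 := by
    calc ((Ioc 0 x).filter fun n => ¬ Squarefree n).card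
        ≤ (((Icc 2 s).filter Nat.Prime).biUnion
            (fun p => (Ioc 0 x).filter (fun n => p^2 ∣ n))).card := Finset.card_le_card hsub
      _ ≤ ∑ p ∈ (Icc 2 s).filter Nat.Prime, ((Ioc 0 x).filter (fun n => p^2 ∣ n)).card :=
          Finset.card_biUnion_le
      _ = ∑ p ∈ (Icc 2 s).filter Nat.Prime, x / p^2 := by
          apply Finset.sum_congr rfl
          intro p _
          exact Nat.Ioc_filter_dvd_card_eq_div x (p^2)
  calc (((Ioc 0 x).filter fun n => ¬ Squarefree n).card : ℚ)
      ≤ ((∑ p ∈ (Icc 2 s).filter Nat.Prime, x / p^2 : ℕ) : ℚ) := by exact_mod_cast hcard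
    _ = ∑ p ∈ (Icc 2 s).filter Nat.Prime, ((x / p^2 : ℕ) : ℚ) := by push_cast; rfl
    _ ≤ ∑ p ∈ (Icc 2 s).filter Nat.Prime, (x:ℚ)/((p:ℚ)^2) := by
          apply Finset.sum_le_sum
          intro p _
          calc ((x / p^2 : ℕ) : ℚ) ≤ (x:ℚ)/((p^2 : ℕ):ℚ) := Nat.cast_div_le
            _ = (x:ℚ)/((p:ℚ)^2) := by push_cast; rfl
    _ = (x:ℚ) * ∑ p ∈ (Icc 2 s).filter Nat.Prime, (1:ℚ)/((p:ℚ)^2) := by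
          rw [Finset.mul_sum]; apply Finset.sum_congr rfl; intros; ring
    _ ≤ (x:ℚ) * (1/2 - 1/(4*((s:ℚ)+1))) := by
          apply mul_le_mul_of_nonneg_left (prime_sq_inv_sum s) (by positivity)

theorem infinitely_many_consecutive_squarefree :
    {n : ℕ | 0 < n ∧ Squarefree n ∧ Squarefree (n + 1)}.Infinite := by
  apply Set.infinite_of_forall_exists_gt
  intro N
  set m : ℕ := 8*N + 16 with hm
  set x : ℕ := m^2 - 1 with hx
  have hm2 : 1 ≤ m^2 := Nat.one_le_two_pow.trans (Nat.pow_le_pow_left (by omega) 2)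
  have hx1 : x + 1 = m^2 := by omega
  have hsx1 : Nat.sqrt (x+1) = m := by rw [hx1, Nat.sqrt_eq']
  have hsx : Nat.sqrt x ≤ m := by
    calc Nat.sqrt x ≤ Nat.sqrt (x+1) := Nat.sqrt_le_sqrt (by omega)
      _ = m := hsx1
  have hNx : N + 1 < x := by nlinarith [hx1, hm]
  set G := (Ioc N x).filter (fun n => Squarefree n ∧ Squarefree (n+1)) with hG
  set B := (Ioc N x).filter (fun n => ¬(Squarefree n ∧ Squarefree (n+1))) with hB
  have hGB : G.card + B.card = x - N := by
    rw [hG, hB, Finset.card_filter_add_card_filter_not, Nat.card_Ioc]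
  set B1 := (Ioc 0 x).filter (fun n => ¬ Squarefree n) with hB1
  set B2 := (Ioc 0 x).filter (fun n => ¬ Squarefree (n+1)) with hB2
  set B1' := (Ioc 0 (x+1)).filter (fun n => ¬ Squarefree n) with hB1'
  have hBsub : B ⊆ B1 ∪ B2 := by
    intro n hn
    simp only [hB, hB1, hB2, mem_filter, mem_Ioc, mem_union] at hn ⊢
    obtain ⟨⟨hn1, hn2⟩, hn3⟩ := hn
    rw [not_and_or] at hn3
    rcases hn3 with h | h
    · exact Or.inl ⟨⟨by omega, hn2⟩, h⟩
    · exact Or.inr ⟨⟨by omega, hn2⟩, h⟩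
  have hB2le : B2.card ≤ B1'.card := by
    apply Finset.card_le_card_of_injOn (fun n => n+1)
    · intro n hn
      simp only [hB2, hB1', mem_filter, mem_Ioc, Finset.mem_coe] at hn ⊢
      exact ⟨⟨by omega, by omega⟩, hn.2⟩
    · exact fun a _ b _ h => by simpa using h
  have hBle : B.card ≤ B1.card + B1'.card := by
    calc B.card ≤ (B1 ∪ B2).card := Finset.card_le_card hBsub
      _ ≤ B1.card + B2.card := Finset.card_union_le _ _
      _ ≤ B1.card + B1'.card := by omega
  -- rational estimates
  set b : ℚ := 1/(4*((m:ℚ)+1)) with hb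
  have hbpos : (0:ℚ) < b := by rw [hb]; positivity
  have hble : b ≤ 1/4 := by
    rw [hb]
    apply one_div_le_one_div_of_le (by norm_num)
    have : (0:ℚ) ≤ (m:ℚ) := by positivity
    linarith
  have hq1 : (B1.card : ℚ) ≤ ((x:ℚ)+1) * (1/2 - b) := by
    have h1 := card_nonsquarefree x
    have ha : b ≤ 1/(4*((Nat.sqrt x:ℚ)+1)) := by
      rw [hb]
      apply one_div_le_one_div_of_le (by positivity)
      have : ((Nat.sqrt x : ℕ):ℚ) ≤ (m:ℚ) := by exact_mod_cast hsx
      linarith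
    have ha2 : 1/(4*((Nat.sqrt x:ℚ)+1)) ≤ 1/4 := by
      apply one_div_le_one_div_of_le (by norm_num)
      have : (0:ℚ) ≤ ((Nat.sqrt x : ℕ):ℚ) := by positivity
      linarith
    have hx0 : (0:ℚ) ≤ (x:ℚ) := by positivity
    nlinarith
  have hq2 : (B1'.card : ℚ) ≤ ((x:ℚ)+1) * (1/2 - b) := by
    have h1 := card_nonsquarefree (x+1)
    rw [hsx1] at h1
    calc (B1'.card : ℚ) ≤ ((x+1 : ℕ):ℚ) * (1/2 - 1/(4*((m:ℚ)+1))) := h1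
      _ = ((x:ℚ)+1) * (1/2 - b) := by rw [hb]; push_cast; ring
  have hxq : (x:ℚ) + 1 = ((m:ℚ))^2 := by exact_mod_cast hx1
  have hmq : (m:ℚ) = 8*(N:ℚ) + 16 := by exact_mod_cast hm
  have hb4 : b * (4*((m:ℚ)+1)) = 1 := by
    rw [hb]; field_simp
  have hBq : (B.card : ℚ) < (x:ℚ) - (N:ℚ) := by
    have hcast : (B.card : ℚ) ≤ (B1.card : ℚ) + (B1'.card : ℚ) := by exact_mod_cast hBle
    have hN0 : (0:ℚ) ≤ (N:ℚ) := by positivity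
    nlinarith [hq1, hq2, hxq, hmq, hb4, hbpos, hble, hN0]
  have hBlt : B.card < x - N := by
    have hNx' : N ≤ x := by omega
    have : ((x - N : ℕ) : ℚ) = (x:ℚ) - (N:ℚ) := by
      push_cast [Nat.cast_sub hNx']; ring
    exact_mod_cast this ▸ hBq
  have hGpos : 0 < G.card := by omega
  obtain ⟨n, hn⟩ := Finset.card_pos.mp hGpos
  simp only [hG, mem_filter, mem_Ioc] at hn
  exact ⟨n, ⟨by omega, hn.2.1, hn.2.2⟩, hn.1.1⟩
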